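/- Let U(n) act on the space of complex antisymmetric n×n matrices by A·X = AXAᵀ, and let 𝔞 = Σ_{j=1}^{[n/2]} ℝ(E_{2j−1,2j} − E_{2j,2j−1}). Then the centralizer of 𝔞 in U(n), i.e. { A ∈ U(n) : A(E_{2j−1,2j} − E_{2j,2j−1})Aᵀ = E_{2j−1,2j} − E_{2j,2j−1} for all 1 ≤ j ≤ [n/2] }, equals the block-diagonal subgroup SU(2)^r = { diag(A_1, …, A_r) : A_k ∈ SU(2) } when n = 2r, and equals SU(2)^r × U(1) = { diag(A_1, …, A_r, z) : A_k ∈ SU(2), z ∈ U(1) } when n = 2r+1. -/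

import Mathlib

noncomputable section

/-- A representation is irreducible if the space is nontrivial and the only invariant
subspaces are `⊥` and `⊤`. -/
def IsIrred {G V : Type*} [Group G] [AddCommGroup V] [Module ℂ V]
    (ρ : Representation ℂ G V) : Prop :=
  Nontrivial V ∧ ∀ W : Submodule ℂ V, (∀ g : G, ∀ v ∈ W, ρ g v ∈ W) → W = ⊥ ∨ W = ⊤

/-- The space of equivariant (intertwining) linear maps between two representations. -/
def EquivMaps {G V W : Type*} [Group G] [AddCommGroup V] [Module ℂ V] [AddCommGroup W]
    [Module ℂ W] (σ : Representation ℂ G V) (ρ : Representation ℂ G W) :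
    Submodule ℂ (V →ₗ[ℂ] W) where
  carrier := {f | ∀ g : G, f ∘ₗ σ g = ρ g ∘ₗ f}
  add_mem' := fun ha hb g => by rw [LinearMap.add_comp, LinearMap.comp_add, ha g, hb g]
  zero_mem' := fun g => by rw [LinearMap.zero_comp, LinearMap.comp_zero]
  smul_mem' := fun c a ha g => by rw [LinearMap.smul_comp, LinearMap.comp_smul, ha g]

/-- A representation `ρ` of a group `G` is multiplicity-free if every irreducible
finite-dimensional representation `σ` of `G` satisfies `dim Hom_G(σ, ρ) ≤ 1`. -/
def MultFree {G W : Type*} [Group G] [AddCommGroup W] [Module ℂ W]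
    (ρ : Representation ℂ G W) : Prop :=
  ∀ (V : Type) [AddCommGroup V] [Module ℂ V] [FiniteDimensional ℂ V]
    (σ : Representation ℂ G V), IsIrred σ → Module.finrank ℂ (EquivMaps σ ρ) ≤ 1

/-- Equivalence (isomorphism) of two representations. -/
def RepEquiv {G V W : Type*} [Group G] [AddCommGroup V] [Module ℂ V] [AddCommGroup W]
    [Module ℂ W] (σ : Representation ℂ G V) (ρ : Representation ℂ G W) : Prop :=
  ∃ e : V ≃ₗ[ℂ] W, ∀ (g : G) (v : V), e (σ g v) = ρ g (e v)

/-- Restriction of a representation to an invariant submodule. -/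
def resSub {G V : Type*} [Group G] [AddCommGroup V] [Module ℂ V]
    (ρ : Representation ℂ G V) (W : Submodule ℂ V) (h : ∀ g : G, ∀ v ∈ W, ρ g v ∈ W) :
    Representation ℂ G W where
  toFun g := (ρ g).restrict (h g)
  map_one' := by ext w; simp [LinearMap.restrict_apply]
  map_mul' g g' := by ext w; simp [LinearMap.restrict_apply]

/-- The tensor product (twist) of a representation with a one-dimensional character. -/
def charTwist {G V : Type*} [Group G] [AddCommGroup V] [Module ℂ V]
    (χ : G →* ℂˣ) (ρ : Representation ℂ G V) : Representation ℂ G V where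
  toFun g := (χ g : ℂ) • ρ g
  map_one' := by simp
  map_mul' g g' := by
    ext v
    show (↑(χ (g * g')) : ℂ) • ρ (g * g') v = ((χ g : ℂ) • ρ g) (((χ g' : ℂ) • ρ g') v)
    rw [map_mul, map_mul, Units.val_mul, LinearMap.smul_apply, LinearMap.smul_apply,
      Module.End.mul_apply, map_smul, mul_smul, smul_comm]

end
noncomputable section SUPart

open Matrix

/-- `SU(n)`: the subgroup of the unitary group `U(n)` of matrices of determinant `1`. -/
def SUgrp (n : ℕ) : Subgroup (Matrix.unitaryGroup (Fin n) ℂ) where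
  carrier := {g | Matrix.det (g : Matrix (Fin n) (Fin n) ℂ) = 1}
  one_mem' := by
    show Matrix.det ((1 : Matrix.unitaryGroup (Fin n) ℂ) : Matrix (Fin n) (Fin n) ℂ) = 1
    rw [OneMemClass.coe_one, Matrix.det_one]
  mul_mem' := by
    intro a b ha hb
    show Matrix.det ((a * b : Matrix.unitaryGroup (Fin n) ℂ) : Matrix (Fin n) (Fin n) ℂ) = 1
    rw [MulMemClass.coe_mul, Matrix.det_mul, ha, hb, one_mul]
  inv_mem' := by
    intro a ha
    show Matrix.det ((a⁻¹ : Matrix.unitaryGroup (Fin n) ℂ) : Matrix (Fin n) (Fin n) ℂ) = 1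
    have h1 : (a : Matrix (Fin n) (Fin n) ℂ) *
        ((a⁻¹ : Matrix.unitaryGroup (Fin n) ℂ) : Matrix (Fin n) (Fin n) ℂ) = 1 := by
      rw [← MulMemClass.coe_mul, mul_inv_cancel, OneMemClass.coe_one]
    have h2 := congrArg Matrix.det h1
    rw [Matrix.det_mul, Matrix.det_one, ha, one_mul] at h2
    exact h2

/-- The coercion of `SU(m)` into complex matrices, as a monoid homomorphism. -/
def suCoeHom (m : ℕ) : SUgrp m →* Matrix (Fin m) (Fin m) ℂ :=
  (Submonoid.subtype (Matrix.unitaryGroup (Fin m) ℂ)).comp (SUgrp m).subtype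

/-- The index identification `Fin 2 × Fin r ≃ Fin (2r)` sending `(a, k) ↦ 2k + a`, so that
the `k`-th block occupies the consecutive pair of indices `2k, 2k+1`. -/
def pairEquiv (r : ℕ) : Fin 2 × Fin r ≃ Fin (2 * r) :=
  (Equiv.prodComm (Fin 2) (Fin r)).trans
    ((finProdFinEquiv : Fin r × Fin 2 ≃ Fin (r * 2)).trans (finCongr (by ring)))

/-- The block-diagonal embedding `(A₁, …, A_r) ↦ diag(A₁, …, A_r)` of `SU(2)^r` into the
monoid of `2r × 2r` complex matrices, with `A_k` occupying rows and columns `2k-1, 2k`. -/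
def suBlockMatrixHom (r : ℕ) : (Fin r → SUgrp 2) →* Matrix (Fin (2 * r)) (Fin (2 * r)) ℂ where
  toFun B := Matrix.reindexAlgEquiv ℂ ℂ (pairEquiv r)
    (Matrix.blockDiagonal fun k => suCoeHom 2 (B k))
  map_one' := by
    have h : (fun k : Fin r => suCoeHom 2 ((1 : Fin r → SUgrp 2) k))
        = fun _ => (1 : Matrix (Fin 2) (Fin 2) ℂ) := by
      funext k
      show suCoeHom 2 1 = 1
      rw [_root_.map_one]
    show Matrix.reindexAlgEquiv ℂ ℂ (pairEquiv r)
      (Matrix.blockDiagonal fun k : Fin r => suCoeHom 2 ((1 : Fin r → SUgrp 2) k)) = 1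
    rw [h]
    have h2 : (fun _ : Fin r => (1 : Matrix (Fin 2) (Fin 2) ℂ))
        = (1 : Fin r → Matrix (Fin 2) (Fin 2) ℂ) := rfl
    rw [h2, Matrix.blockDiagonal_one, _root_.map_one]
  map_mul' B C := by
    have h : (fun k : Fin r => suCoeHom 2 ((B * C) k))
        = fun k => suCoeHom 2 (B k) * suCoeHom 2 (C k) := by
      funext k
      show suCoeHom 2 (B k * C k) = _
      rw [_root_.map_mul]
    show Matrix.reindexAlgEquiv ℂ ℂ (pairEquiv r)
        (Matrix.blockDiagonal fun k : Fin r => suCoeHom 2 ((B * C) k))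
      = Matrix.reindexAlgEquiv ℂ ℂ (pairEquiv r)
          (Matrix.blockDiagonal fun k : Fin r => suCoeHom 2 (B k)) *
        Matrix.reindexAlgEquiv ℂ ℂ (pairEquiv r)
          (Matrix.blockDiagonal fun k : Fin r => suCoeHom 2 (C k))
    rw [h, Matrix.blockDiagonal_mul, _root_.map_mul]

lemma suBlockMatrixHom_mem_unitary (r : ℕ) (B : Fin r → SUgrp 2) :
    suBlockMatrixHom r B ∈ Matrix.unitaryGroup (Fin (2 * r)) ℂ := by
  rw [Matrix.mem_unitaryGroup_iff]
  have hD : ∀ k : Fin r, suCoeHom 2 (B k) * (suCoeHom 2 (B k))ᴴ = 1 := by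
    intro k
    rw [← Matrix.star_eq_conjTranspose]
    exact Unitary.mul_star_self_of_mem (B k).1.2
  
  show Matrix.reindexAlgEquiv ℂ ℂ (pairEquiv r)
      (Matrix.blockDiagonal fun k => suCoeHom 2 (B k)) *
    star (Matrix.reindexAlgEquiv ℂ ℂ (pairEquiv r)
      (Matrix.blockDiagonal fun k => suCoeHom 2 (B k))) = 1
  rw [Matrix.star_eq_conjTranspose, Matrix.reindexAlgEquiv_apply,
    Matrix.conjTranspose_reindex, Matrix.blockDiagonal_conjTranspose,
    ← Matrix.reindexAlgEquiv_apply ℂ ℂ (pairEquiv r),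
    ← Matrix.reindexAlgEquiv_apply ℂ ℂ (pairEquiv r), ← _root_.map_mul,
    ← Matrix.blockDiagonal_mul]
  have h1 : (fun k => suCoeHom 2 (B k) * (suCoeHom 2 (B k))ᴴ)
      = fun _ => (1 : Matrix (Fin 2) (Fin 2) ℂ) := funext fun k => hD k
  rw [h1]
  have h2 : (fun _ : Fin r => (1 : Matrix (Fin 2) (Fin 2) ℂ))
      = (1 : Fin r → Matrix (Fin 2) (Fin 2) ℂ) := rfl
  rw [h2, Matrix.blockDiagonal_one, _root_.map_one]

/-- The block-diagonal embedding of `SU(2)^r` into the unitary group `U(2r)`, `n = 2r` even: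
`(A₁, …, A_r) ↦ diag(A₁, …, A_r)`. -/
def suBlockHom (r : ℕ) : (Fin r → SUgrp 2) →* Matrix.unitaryGroup (Fin (2 * r)) ℂ :=
  (suBlockMatrixHom r).codRestrict (Matrix.unitaryGroup (Fin (2 * r)) ℂ)
    (suBlockMatrixHom_mem_unitary r)

end SUPart
noncomputable section SUOddPart

open Matrix

/-- The block-diagonal embedding `((A₁, …, A_r), z) ↦ diag(A₁, …, A_r, z)` of
`SU(2)^r × U(1)` into the monoid of `(2r+1) × (2r+1)` complex matrices. -/
def suOddMatrixHom (r : ℕ) :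
    ((Fin r → SUgrp 2) × unitary ℂ) →* Matrix (Fin (2 * r + 1)) (Fin (2 * r + 1)) ℂ where
  toFun p := Matrix.reindexAlgEquiv ℂ ℂ
    (finSumFinEquiv : Fin (2 * r) ⊕ Fin 1 ≃ Fin (2 * r + 1))
    (Matrix.fromBlocks (suBlockMatrixHom r p.1) 0 0
      (Matrix.diagonal fun _ : Fin 1 => (p.2 : ℂ)))
  map_one' := by
    show Matrix.reindexAlgEquiv ℂ ℂ (finSumFinEquiv : Fin (2 * r) ⊕ Fin 1 ≃ Fin (2 * r + 1))
      (Matrix.fromBlocks (suBlockMatrixHom r 1) 0 0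
        (Matrix.diagonal fun _ : Fin 1 => ((1 : unitary ℂ) : ℂ))) = 1
    rw [_root_.map_one (suBlockMatrixHom r)]
    have h : (fun _ : Fin 1 => ((1 : unitary ℂ) : ℂ)) = fun _ => (1 : ℂ) := rfl
    rw [h, Matrix.diagonal_one, Matrix.fromBlocks_one, _root_.map_one]
  map_mul' p q := by
    show Matrix.reindexAlgEquiv ℂ ℂ (finSumFinEquiv : Fin (2 * r) ⊕ Fin 1 ≃ Fin (2 * r + 1))
        (Matrix.fromBlocks (suBlockMatrixHom r (p.1 * q.1)) 0 0
          (Matrix.diagonal fun _ : Fin 1 => ((p.2 * q.2 : unitary ℂ) : ℂ)))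
      = Matrix.reindexAlgEquiv ℂ ℂ (finSumFinEquiv : Fin (2 * r) ⊕ Fin 1 ≃ Fin (2 * r + 1))
          (Matrix.fromBlocks (suBlockMatrixHom r p.1) 0 0
            (Matrix.diagonal fun _ : Fin 1 => (p.2 : ℂ))) *
        Matrix.reindexAlgEquiv ℂ ℂ (finSumFinEquiv : Fin (2 * r) ⊕ Fin 1 ≃ Fin (2 * r + 1))
          (Matrix.fromBlocks (suBlockMatrixHom r q.1) 0 0
            (Matrix.diagonal fun _ : Fin 1 => (q.2 : ℂ)))
    rw [← _root_.map_mul, Matrix.fromBlocks_multiply]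
    simp only [Matrix.mul_zero, Matrix.zero_mul, add_zero, zero_add,
      Matrix.diagonal_mul_diagonal, ← _root_.map_mul (suBlockMatrixHom r)]
    rfl

lemma suOddMatrixHom_mem_unitary (r : ℕ) (p : (Fin r → SUgrp 2) × unitary ℂ) :
    suOddMatrixHom r p ∈ Matrix.unitaryGroup (Fin (2 * r + 1)) ℂ := by
  rw [Matrix.mem_unitaryGroup_iff]
  show Matrix.reindexAlgEquiv ℂ ℂ (finSumFinEquiv : Fin (2 * r) ⊕ Fin 1 ≃ Fin (2 * r + 1))
      (Matrix.fromBlocks (suBlockMatrixHom r p.1) 0 0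
        (Matrix.diagonal fun _ : Fin 1 => (p.2 : ℂ))) *
    star (Matrix.reindexAlgEquiv ℂ ℂ (finSumFinEquiv : Fin (2 * r) ⊕ Fin 1 ≃ Fin (2 * r + 1))
      (Matrix.fromBlocks (suBlockMatrixHom r p.1) 0 0
        (Matrix.diagonal fun _ : Fin 1 => (p.2 : ℂ)))) = 1
  rw [Matrix.star_eq_conjTranspose, Matrix.reindexAlgEquiv_apply,
    Matrix.conjTranspose_reindex, Matrix.fromBlocks_conjTranspose,
    ← Matrix.reindexAlgEquiv_apply ℂ ℂ, ← Matrix.reindexAlgEquiv_apply ℂ ℂ,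
    ← _root_.map_mul, Matrix.fromBlocks_multiply]
  have hA : suBlockMatrixHom r p.1 * (suBlockMatrixHom r p.1)ᴴ = 1 := by
    rw [← Matrix.star_eq_conjTranspose]
    have hm := suBlockMatrixHom_mem_unitary r p.1
    rw [Matrix.mem_unitaryGroup_iff] at hm
    exact hm
  have hz : Matrix.diagonal (fun _ : Fin 1 => (p.2 : ℂ)) *
      (Matrix.diagonal fun _ : Fin 1 => (p.2 : ℂ))ᴴ = 1 := by
    rw [Matrix.diagonal_conjTranspose, Matrix.diagonal_mul_diagonal]
    have h : (fun i : Fin 1 => (p.2 : ℂ) * (star (fun _ : Fin 1 => (p.2 : ℂ))) i)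
        = fun _ : Fin 1 => (1 : ℂ) := by
      funext i
      show (p.2 : ℂ) * star (p.2 : ℂ) = 1
      exact Unitary.mul_star_self_of_mem p.2.2
    rw [h, Matrix.diagonal_one]
  simp only [Matrix.mul_zero, Matrix.zero_mul, add_zero, zero_add,
    Matrix.conjTranspose_zero, hA, hz, Matrix.fromBlocks_one, _root_.map_one]

/-- The block-diagonal embedding of `SU(2)^r × U(1)` into the unitary group `U(2r+1)`,
`n = 2r+1` odd: `((A₁, …, A_r), z) ↦ diag(A₁, …, A_r, z)`. -/
def suOddHom (r : ℕ) :
    ((Fin r → SUgrp 2) × unitary ℂ) →* Matrix.unitaryGroup (Fin (2 * r + 1)) ℂ :=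
  (suOddMatrixHom r).codRestrict (Matrix.unitaryGroup (Fin (2 * r + 1)) ℂ)
    (suOddMatrixHom_mem_unitary r)

end SUOddPart
noncomputable section Stmt16Part

/-- The matrix `E_{2j,2j+1} - E_{2j+1,2j}` (`0`-based indices), spanning the Cartan
subspace `𝔞` for the Hermitian symmetric pair `(SO*(2n), U(n))`. -/
def aBasisMat (n j : ℕ) (h : 2 * j + 1 < n) : Matrix (Fin n) (Fin n) ℂ :=
  Matrix.single (⟨2 * j, by omega⟩ : Fin n) (⟨2 * j + 1, h⟩ : Fin n) (1 : ℂ) -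
    Matrix.single (⟨2 * j + 1, h⟩ : Fin n) (⟨2 * j, by omega⟩ : Fin n) (1 : ℂ)


noncomputable section CentGeneral
open Matrix

lemma aBasisMat_apply (n j : ℕ) (h : 2 * j + 1 < n) (p q : Fin n) :
    aBasisMat n j h p q =
      if (p : ℕ) = 2 * j ∧ (q : ℕ) = 2 * j + 1 then 1
      else if (p : ℕ) = 2 * j + 1 ∧ (q : ℕ) = 2 * j then -1 else 0 := by
  rcases p with ⟨pv, hp⟩; rcases q with ⟨qv, hq⟩
  simp only [aBasisMat, Matrix.sub_apply, Matrix.single, Matrix.of_apply, Fin.mk.injEq]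
  split_ifs <;> first | omega | norm_num

lemma conj_entry {n : ℕ} (A : Matrix (Fin n) (Fin n) ℂ) (j : ℕ) (h : 2 * j + 1 < n)
    (p q : Fin n) :
    (A * aBasisMat n j h * Aᵀ) p q =
      A p ⟨2 * j, by omega⟩ * A q ⟨2 * j + 1, h⟩ - A p ⟨2 * j + 1, h⟩ * A q ⟨2 * j, by omega⟩ := by
  have key : ∀ i0 i1 : Fin n, (A * Matrix.single i0 i1 (1 : ℂ) * Aᵀ) p q
      = A p i0 * A q i1 := by
    intro i0 i1
    rw [Matrix.mul_apply, Finset.sum_eq_single i1]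
    · simp [Matrix.transpose_apply]
    · intro b _ hb
      rw [Matrix.mul_single_apply_of_ne (hbj := hb), zero_mul]
    · simp
  simp only [aBasisMat, Matrix.mul_sub, Matrix.sub_mul, Matrix.sub_apply, key]

lemma cent_eq {n : ℕ} (A : Matrix (Fin n) (Fin n) ℂ) (j : ℕ) (h : 2 * j + 1 < n)
    (hc : A * aBasisMat n j h * Aᵀ = aBasisMat n j h) (p q : Fin n) :
    A p ⟨2 * j, by omega⟩ * A q ⟨2 * j + 1, h⟩ - A p ⟨2 * j + 1, h⟩ * A q ⟨2 * j, by omega⟩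
      = aBasisMat n j h p q := by
  rw [← conj_entry, hc]

lemma cent_det {n : ℕ} (A : Matrix (Fin n) (Fin n) ℂ) (j : ℕ) (h : 2 * j + 1 < n)
    (hc : A * aBasisMat n j h * Aᵀ = aBasisMat n j h) :
    A ⟨2 * j, by omega⟩ ⟨2 * j, by omega⟩ * A ⟨2 * j + 1, h⟩ ⟨2 * j + 1, h⟩
      - A ⟨2 * j, by omega⟩ ⟨2 * j + 1, h⟩ * A ⟨2 * j + 1, h⟩ ⟨2 * j, by omega⟩ = 1 := by
  have e := cent_eq A j h hc ⟨2 * j, by omega⟩ ⟨2 * j + 1, h⟩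
  rwa [aBasisMat_apply, if_pos ⟨rfl, rfl⟩] at e

lemma cent_zero {n : ℕ} (A : Matrix (Fin n) (Fin n) ℂ) (j : ℕ) (h : 2 * j + 1 < n)
    (hc : A * aBasisMat n j h * Aᵀ = aBasisMat n j h) (p : Fin n)
    (hp0 : (p : ℕ) ≠ 2 * j) (hp1 : (p : ℕ) ≠ 2 * j + 1) (q : Fin n)
    (hq : (q : ℕ) = 2 * j ∨ (q : ℕ) = 2 * j + 1) : A p q = 0 := by
  have e1 := cent_det A j h hc
  have e2 := cent_eq A j h hc p ⟨2 * j, by omega⟩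
  have e3 := cent_eq A j h hc p ⟨2 * j + 1, h⟩
  rw [aBasisMat_apply] at e2 e3
  rw [if_neg (by rintro ⟨h1, h2⟩; omega), if_neg (by rintro ⟨h1, h2⟩; omega)] at e2
  rw [if_neg (by rintro ⟨h1, h2⟩; omega), if_neg (by rintro ⟨h1, h2⟩; omega)] at e3
  set x := A p ⟨2 * j, by omega⟩ with hx
  set y := A p ⟨2 * j + 1, h⟩ with hy
  set a := A ⟨2 * j, by omega⟩ ⟨2 * j, by omega⟩ with ha
  set b := A ⟨2 * j, by omega⟩ ⟨2 * j + 1, h⟩ with hb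
  set c := A ⟨2 * j + 1, h⟩ ⟨2 * j, by omega⟩ with hcc
  set d := A ⟨2 * j + 1, h⟩ ⟨2 * j + 1, h⟩ with hd
  have hx0 : x = 0 := by linear_combination (-x) * e1 + a * e3 - c * e2
  have hy0 : y = 0 := by linear_combination (-y) * e1 + b * e3 - d * e2
  rcases hq with hq | hq
  · have hqq : q = ⟨2 * j, by omega⟩ := Fin.ext hq
    rw [hqq, ← hx, hx0]
  · have hqq : q = ⟨2 * j + 1, h⟩ := Fin.ext hq
    rw [hqq, ← hy, hy0]

lemma sum_two_of_ne {n : ℕ} (f : Fin n → ℂ) (i0 i1 : Fin n) (hne : i0 ≠ i1)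
    (hz : ∀ p, p ≠ i0 → p ≠ i1 → f p = 0) : ∑ p, f p = f i0 + f i1 := by
  have hs := Finset.sum_subset (Finset.subset_univ ({i0, i1} : Finset (Fin n)))
    (fun x _ hx => by
      simp only [Finset.mem_insert, Finset.mem_singleton, not_or] at hx
      exact hz x hx.1 hx.2)
  rw [← hs, Finset.sum_pair hne]

lemma col_orth {n : ℕ} (A : Matrix (Fin n) (Fin n) ℂ)
    (hA : A ∈ Matrix.unitaryGroup (Fin n) ℂ) (j : ℕ) (hj : 2 * j + 1 < n)
    (hc : A * aBasisMat n j hj * Aᵀ = aBasisMat n j hj) (q q' : Fin n)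
    (hq : (q : ℕ) = 2 * j ∨ (q : ℕ) = 2 * j + 1)
    (hq' : (q' : ℕ) = 2 * j ∨ (q' : ℕ) = 2 * j + 1) :
    star (A ⟨2 * j, by omega⟩ q) * A ⟨2 * j, by omega⟩ q'
      + star (A ⟨2 * j + 1, hj⟩ q) * A ⟨2 * j + 1, hj⟩ q'
      = if q = q' then 1 else 0 := by
  have ent := congrFun (congrFun (Matrix.mem_unitaryGroup_iff'.mp hA) q) q'
  rw [Matrix.mul_apply] at ent
  rw [sum_two_of_ne (fun p => (star A) q p * A p q') ⟨2 * j, by omega⟩ ⟨2 * j + 1, hj⟩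
      (by simp [Fin.ext_iff]) (fun p hp0 hp1 => by
        have h0 : (p : ℕ) ≠ 2 * j := fun hv => hp0 (Fin.ext hv)
        have h1 : (p : ℕ) ≠ 2 * j + 1 := fun hv => hp1 (Fin.ext hv)
        show (star A) q p * A p q' = 0
        rw [Matrix.star_apply, cent_zero A j hj hc p h0 h1 q hq, star_zero, zero_mul])] at ent
  simpa [Matrix.star_apply, Matrix.one_apply] using ent

/-- The 2×2 diagonal block of `A` at position `j`. -/
def blockOf {n : ℕ} (A : Matrix (Fin n) (Fin n) ℂ) (j : ℕ) (hj : 2 * j + 1 < n) :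
    Matrix (Fin 2) (Fin 2) ℂ :=
  !![A ⟨2 * j, by omega⟩ ⟨2 * j, by omega⟩, A ⟨2 * j, by omega⟩ ⟨2 * j + 1, hj⟩;
     A ⟨2 * j + 1, hj⟩ ⟨2 * j, by omega⟩, A ⟨2 * j + 1, hj⟩ ⟨2 * j + 1, hj⟩]

lemma blockOf_det {n : ℕ} (A : Matrix (Fin n) (Fin n) ℂ) (j : ℕ) (hj : 2 * j + 1 < n)
    (hc : A * aBasisMat n j hj * Aᵀ = aBasisMat n j hj) :
    (blockOf A j hj).det = 1 := by
  rw [blockOf, Matrix.det_fin_two_of]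
  exact cent_det A j hj hc

lemma blockOf_mem {n : ℕ} (A : Matrix (Fin n) (Fin n) ℂ)
    (hA : A ∈ Matrix.unitaryGroup (Fin n) ℂ) (j : ℕ) (hj : 2 * j + 1 < n)
    (hc : A * aBasisMat n j hj * Aᵀ = aBasisMat n j hj) :
    blockOf A j hj ∈ Matrix.unitaryGroup (Fin 2) ℂ := by
  rw [Matrix.mem_unitaryGroup_iff']
  ext b b'
  rw [Matrix.mul_apply, Fin.sum_univ_two]
  fin_cases b <;> fin_cases b' <;>
    simp only [Fin.mk_zero, Fin.mk_one, Matrix.star_apply, blockOf, Matrix.cons_val',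
      Matrix.cons_val_zero, Matrix.cons_val_one, Matrix.head_cons, Matrix.head_fin_const,
      Matrix.empty_val', Matrix.cons_val_fin_one, Matrix.of_apply, Fin.isValue,
      Matrix.one_apply]
  · rw [col_orth A hA j hj hc _ _ (Or.inl rfl) (Or.inl rfl)]
    norm_num
  · rw [col_orth A hA j hj hc _ _ (Or.inl rfl) (Or.inr rfl)]
    norm_num [Fin.ext_iff]
  · rw [col_orth A hA j hj hc _ _ (Or.inr rfl) (Or.inl rfl)]
    norm_num [Fin.ext_iff]
  · rw [col_orth A hA j hj hc _ _ (Or.inr rfl) (Or.inr rfl)]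
    norm_num

/-- The block of `A` at `j`, as an element of `SU(2)`. -/
def blockSU {n : ℕ} (A : Matrix (Fin n) (Fin n) ℂ)
    (hA : A ∈ Matrix.unitaryGroup (Fin n) ℂ) (j : ℕ) (hj : 2 * j + 1 < n)
    (hc : A * aBasisMat n j hj * Aᵀ = aBasisMat n j hj) : SUgrp 2 :=
  ⟨⟨blockOf A j hj, blockOf_mem A hA j hj hc⟩, blockOf_det A j hj hc⟩

lemma blockSU_coe {n : ℕ} (A : Matrix (Fin n) (Fin n) ℂ)
    (hA : A ∈ Matrix.unitaryGroup (Fin n) ℂ) (j : ℕ) (hj : 2 * j + 1 < n)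
    (hc : A * aBasisMat n j hj * Aᵀ = aBasisMat n j hj) :
    suCoeHom 2 (blockSU A hA j hj hc) = blockOf A j hj := rfl


lemma blockOf_apply {n : ℕ} (A : Matrix (Fin n) (Fin n) ℂ) (j : ℕ) (hj : 2 * j + 1 < n)
    (a b : Fin 2) :
    blockOf A j hj a b = A ⟨2 * j + a, by have := a.isLt; omega⟩
      ⟨2 * j + b, by have := b.isLt; omega⟩ := by
  fin_cases a <;> fin_cases b <;>
    simp only [blockOf, Fin.mk_zero, Fin.mk_one, Matrix.cons_val', Matrix.cons_val_zero,
      Matrix.cons_val_one, Matrix.head_cons, Matrix.head_fin_const, Matrix.empty_val',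
      Matrix.cons_val_fin_one, Matrix.of_apply, Fin.isValue] <;>
    exact congr_arg₂ A (Fin.ext (by simp)) (Fin.ext (by simp))

lemma block_entries {n r : ℕ} (hn : 2 * r ≤ n) (A : Matrix (Fin n) (Fin n) ℂ)
    (hA : A ∈ Matrix.unitaryGroup (Fin n) ℂ)
    (hc : ∀ (j : ℕ) (hj : 2 * j + 1 < n), A * aBasisMat n j hj * Aᵀ = aBasisMat n j hj)
    (a a' : Fin 2) (k k' : Fin r) :
    A ⟨↑a + 2 * ↑k, by have := a.isLt; have := k.isLt; omega⟩
        ⟨↑a' + 2 * ↑k', by have := a'.isLt; have := k'.isLt; omega⟩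
      = if k = k' then blockOf A ↑k (by have := k.isLt; omega) a a' else 0 := by
  by_cases hk : k = k'
  · subst hk
    rw [if_pos rfl, blockOf_apply]
    exact congr_arg₂ A (Fin.ext (Nat.add_comm _ _)) (Fin.ext (Nat.add_comm _ _))
  · rw [if_neg hk]
    have hkv : (k : ℕ) ≠ (k' : ℕ) := fun hv => hk (Fin.ext hv)
    have ha := a.isLt
    have ha' := a'.isLt
    have h0 : ((a : ℕ) + 2 * (k : ℕ)) ≠ 2 * (k' : ℕ) := by omega
    have h1 : ((a : ℕ) + 2 * (k : ℕ)) ≠ 2 * (k' : ℕ) + 1 := by omega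
    have h2 : ((a' : ℕ) + 2 * (k' : ℕ)) = 2 * (k' : ℕ)
        ∨ ((a' : ℕ) + 2 * (k' : ℕ)) = 2 * (k' : ℕ) + 1 := by omega
    exact cent_zero A ↑k' (by have := k'.isLt; omega) (hc _ _) _ h0 h1 _ h2

end CentGeneral

noncomputable section EvenOdd
open Matrix

lemma pairEquiv_val (r : ℕ) (a : Fin 2) (k : Fin r) :
    (pairEquiv r (a, k) : ℕ) = (a : ℕ) + 2 * (k : ℕ) := rfl

lemma pairEquiv_mk (r : ℕ) (a : Fin 2) (k : Fin r) :
    pairEquiv r (a, k)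
      = (⟨(a : ℕ) + 2 * (k : ℕ), by have := a.isLt; have := k.isLt; omega⟩ : Fin (2 * r)) :=
  Fin.ext rfl

lemma suBlock_apply (r : ℕ) (B : Fin r → SUgrp 2) (a a' : Fin 2) (k k' : Fin r) :
    suBlockMatrixHom r B (pairEquiv r (a, k)) (pairEquiv r (a', k')) =
      if k = k' then suCoeHom 2 (B k) a a' else 0 := by
  show Matrix.reindexAlgEquiv ℂ ℂ (pairEquiv r)
    (Matrix.blockDiagonal fun k => suCoeHom 2 (B k)) _ _ = _
  rw [Matrix.reindexAlgEquiv_apply, Matrix.reindex_apply, Matrix.submatrix_apply,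
    Equiv.symm_apply_apply, Equiv.symm_apply_apply, Matrix.blockDiagonal_apply]

lemma block_prod (r : ℕ) (B : Fin r → SUgrp 2) (j : ℕ) (hjr : j < r) (a a' : Fin 2)
    (k k' : Fin r) :
    (if k = ⟨j, hjr⟩ then suCoeHom 2 (B k) a 0 else 0)
        * (if k' = ⟨j, hjr⟩ then suCoeHom 2 (B k') a' 1 else 0)
      - (if k = ⟨j, hjr⟩ then suCoeHom 2 (B k) a 1 else 0)
        * (if k' = ⟨j, hjr⟩ then suCoeHom 2 (B k') a' 0 else 0)
    = if (a : ℕ) + 2 * (k : ℕ) = 2 * j ∧ (a' : ℕ) + 2 * (k' : ℕ) = 2 * j + 1 then 1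
      else if (a : ℕ) + 2 * (k : ℕ) = 2 * j + 1 ∧ (a' : ℕ) + 2 * (k' : ℕ) = 2 * j then -1
      else 0 := by
  have ha := a.isLt
  have ha' := a'.isLt
  by_cases hk : k = ⟨j, hjr⟩ <;> by_cases hk' : k' = ⟨j, hjr⟩
  · have hdet : suCoeHom 2 (B ⟨j, hjr⟩) 0 0 * suCoeHom 2 (B ⟨j, hjr⟩) 1 1
        - suCoeHom 2 (B ⟨j, hjr⟩) 0 1 * suCoeHom 2 (B ⟨j, hjr⟩) 1 0 = 1 := by
      have h : ((B ⟨j, hjr⟩ : Matrix.unitaryGroup (Fin 2) ℂ) :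
          Matrix (Fin 2) (Fin 2) ℂ).det = 1 := (B ⟨j, hjr⟩).2
      rw [Matrix.det_fin_two] at h
      exact h
    subst hk; subst hk'
    rw [if_pos rfl, if_pos rfl, if_pos rfl, if_pos rfl]
    fin_cases a <;> fin_cases a' <;>
      · simp only [Fin.mk_zero, Fin.mk_one, Fin.val_zero, Fin.val_one, Fin.isValue]
        split_ifs <;> first | omega | exact hdet | linear_combination -hdet | ring
  · have hv : (k' : ℕ) ≠ j := fun hv => hk' (Fin.ext hv)
    rw [if_neg hk', if_neg hk']
    split_ifs <;> first | omega | ring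
  · have hv : (k : ℕ) ≠ j := fun hv => hk (Fin.ext hv)
    rw [if_neg hk, if_neg hk]
    split_ifs <;> first | omega | ring
  · have hv : (k : ℕ) ≠ j := fun hv => hk (Fin.ext hv)
    rw [if_neg hk, if_neg hk]
    split_ifs <;> first | omega | ring

lemma even_forward (r : ℕ) (A : Matrix (Fin (2 * r)) (Fin (2 * r)) ℂ)
    (hA : A ∈ Matrix.unitaryGroup (Fin (2 * r)) ℂ)
    (hc : ∀ (j : ℕ) (hj : 2 * j + 1 < 2 * r),
      A * aBasisMat (2 * r) j hj * Aᵀ = aBasisMat (2 * r) j hj) :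
    ∃ B : Fin r → SUgrp 2, A = suBlockMatrixHom r B := by
  refine ⟨fun k => blockSU A hA ↑k (by have := k.isLt; omega) (hc _ _), ?_⟩
  ext p q
  obtain ⟨⟨a, k⟩, rfl⟩ := (pairEquiv r).surjective p
  obtain ⟨⟨a', k'⟩, rfl⟩ := (pairEquiv r).surjective q
  rw [suBlock_apply, pairEquiv_mk, pairEquiv_mk]
  exact block_entries (le_refl _) A hA hc a a' k k'

lemma even_backward (r : ℕ) (B : Fin r → SUgrp 2) (j : ℕ) (hj : 2 * j + 1 < 2 * r) :
    suBlockMatrixHom r B * aBasisMat (2 * r) j hj * (suBlockMatrixHom r B)ᵀ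
      = aBasisMat (2 * r) j hj := by
  have hjr : j < r := by omega
  ext p q
  rw [conj_entry]
  obtain ⟨⟨a, k⟩, rfl⟩ := (pairEquiv r).surjective p
  obtain ⟨⟨a', k'⟩, rfl⟩ := (pairEquiv r).surjective q
  have hc0 : (⟨2 * j, by omega⟩ : Fin (2 * r)) = pairEquiv r (0, ⟨j, hjr⟩) :=
    Fin.ext (by simp [pairEquiv_val])
  have hc1 : (⟨2 * j + 1, hj⟩ : Fin (2 * r)) = pairEquiv r (1, ⟨j, hjr⟩) :=
    Fin.ext (by simp [pairEquiv_val]; omega)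
  rw [hc0, hc1, suBlock_apply, suBlock_apply, suBlock_apply, suBlock_apply, aBasisMat_apply,
    pairEquiv_val, pairEquiv_val]
  exact block_prod r B j hjr a a' k k'

end EvenOdd


noncomputable section OddLemmas
open Matrix

lemma sumInl_val (r : ℕ) (i : Fin (2 * r)) :
    ((finSumFinEquiv (Sum.inl i) : Fin (2 * r + 1)) : ℕ) = (i : ℕ) := by simp

lemma sumInr_val (r : ℕ) (i : Fin 1) :
    ((finSumFinEquiv (Sum.inr i) : Fin (2 * r + 1)) : ℕ) = 2 * r := by
  rw [Subsingleton.elim i 0]; simp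

lemma suOdd_apply_ll (r : ℕ) (p : (Fin r → SUgrp 2) × unitary ℂ) (i i' : Fin (2 * r)) :
    suOddMatrixHom r p (finSumFinEquiv (Sum.inl i)) (finSumFinEquiv (Sum.inl i')) =
      suBlockMatrixHom r p.1 i i' := by
  show Matrix.reindexAlgEquiv ℂ ℂ (finSumFinEquiv : Fin (2 * r) ⊕ Fin 1 ≃ Fin (2 * r + 1))
    (Matrix.fromBlocks (suBlockMatrixHom r p.1) 0 0
      (Matrix.diagonal fun _ : Fin 1 => (p.2 : ℂ))) _ _ = _
  rw [Matrix.reindexAlgEquiv_apply, Matrix.reindex_apply, Matrix.submatrix_apply,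
    Equiv.symm_apply_apply, Equiv.symm_apply_apply]
  rfl

lemma suOdd_apply_rl (r : ℕ) (p : (Fin r → SUgrp 2) × unitary ℂ) (i : Fin 1)
    (i' : Fin (2 * r)) :
    suOddMatrixHom r p (finSumFinEquiv (Sum.inr i)) (finSumFinEquiv (Sum.inl i')) = 0 := by
  show Matrix.reindexAlgEquiv ℂ ℂ (finSumFinEquiv : Fin (2 * r) ⊕ Fin 1 ≃ Fin (2 * r + 1))
    (Matrix.fromBlocks (suBlockMatrixHom r p.1) 0 0
      (Matrix.diagonal fun _ : Fin 1 => (p.2 : ℂ))) _ _ = _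
  rw [Matrix.reindexAlgEquiv_apply, Matrix.reindex_apply, Matrix.submatrix_apply,
    Equiv.symm_apply_apply, Equiv.symm_apply_apply]
  rfl

lemma suOdd_apply_lr (r : ℕ) (p : (Fin r → SUgrp 2) × unitary ℂ) (i : Fin (2 * r))
    (i' : Fin 1) :
    suOddMatrixHom r p (finSumFinEquiv (Sum.inl i)) (finSumFinEquiv (Sum.inr i')) = 0 := by
  show Matrix.reindexAlgEquiv ℂ ℂ (finSumFinEquiv : Fin (2 * r) ⊕ Fin 1 ≃ Fin (2 * r + 1))
    (Matrix.fromBlocks (suBlockMatrixHom r p.1) 0 0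
      (Matrix.diagonal fun _ : Fin 1 => (p.2 : ℂ))) _ _ = _
  rw [Matrix.reindexAlgEquiv_apply, Matrix.reindex_apply, Matrix.submatrix_apply,
    Equiv.symm_apply_apply, Equiv.symm_apply_apply]
  rfl

lemma suOdd_apply_rr (r : ℕ) (p : (Fin r → SUgrp 2) × unitary ℂ) (i i' : Fin 1) :
    suOddMatrixHom r p (finSumFinEquiv (Sum.inr i)) (finSumFinEquiv (Sum.inr i')) =
      (p.2 : ℂ) := by
  show Matrix.reindexAlgEquiv ℂ ℂ (finSumFinEquiv : Fin (2 * r) ⊕ Fin 1 ≃ Fin (2 * r + 1))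
    (Matrix.fromBlocks (suBlockMatrixHom r p.1) 0 0
      (Matrix.diagonal fun _ : Fin 1 => (p.2 : ℂ))) _ _ = _
  rw [Matrix.reindexAlgEquiv_apply, Matrix.reindex_apply, Matrix.submatrix_apply,
    Equiv.symm_apply_apply, Equiv.symm_apply_apply]
  show Matrix.diagonal (fun _ : Fin 1 => (p.2 : ℂ)) i i' = _
  rw [Subsingleton.elim i' i, Matrix.diagonal_apply_eq]

lemma odd_forward (r : ℕ) (A : Matrix (Fin (2 * r + 1)) (Fin (2 * r + 1)) ℂ)
    (hA : A ∈ Matrix.unitaryGroup (Fin (2 * r + 1)) ℂ)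
    (hc : ∀ (j : ℕ) (hj : 2 * j + 1 < 2 * r + 1),
      A * aBasisMat (2 * r + 1) j hj * Aᵀ = aBasisMat (2 * r + 1) j hj) :
    ∃ (B : Fin r → SUgrp 2) (z : unitary ℂ), A = suOddMatrixHom r (B, z) := by
  have hvl : ((Fin.last (2 * r) : Fin (2 * r + 1)) : ℕ) = 2 * r := rfl
  have hrow : ∀ q : Fin (2 * r + 1), (q : ℕ) < 2 * r → A (Fin.last (2 * r)) q = 0 := by
    intro q hq
    refine cent_zero A ((q : ℕ) / 2) (by omega) (hc _ _) (Fin.last (2 * r))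
      (by rw [hvl]; omega) (by rw [hvl]; omega) q (by omega)
  have hzz : A (Fin.last (2 * r)) (Fin.last (2 * r))
      * star (A (Fin.last (2 * r)) (Fin.last (2 * r))) = 1 := by
    have ent := congrFun (congrFun (Matrix.mem_unitaryGroup_iff.mp hA) (Fin.last (2 * r)))
      (Fin.last (2 * r))
    rw [Matrix.mul_apply, Finset.sum_eq_single (Fin.last (2 * r))] at ent
    · rw [Matrix.one_apply_eq] at ent
      simpa [Matrix.star_apply] using ent
    · intro q _ hq
      have hqv : (q : ℕ) < 2 * r := by
        have h1 := q.isLt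
        have h2 : (q : ℕ) ≠ 2 * r := fun hv => hq (Fin.ext (hv.trans hvl.symm))
        omega
      rw [hrow q hqv, zero_mul]
    · simp
  have hstar : star (A (Fin.last (2 * r)) (Fin.last (2 * r))) ≠ 0 := by
    intro h0; rw [h0, mul_zero] at hzz; exact zero_ne_one hzz
  have hcol : ∀ p : Fin (2 * r + 1), p ≠ Fin.last (2 * r) → A p (Fin.last (2 * r)) = 0 := by
    intro p hp
    have ent := congrFun (congrFun (Matrix.mem_unitaryGroup_iff.mp hA) p) (Fin.last (2 * r))
    rw [Matrix.mul_apply, Finset.sum_eq_single (Fin.last (2 * r))] at ent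
    · rw [Matrix.one_apply_ne hp] at ent
      rcases mul_eq_zero.mp ent with h | h
      · exact h
      · exact absurd (by rwa [Matrix.star_apply] at h) hstar
    · intro q _ hq
      have hqv : (q : ℕ) < 2 * r := by
        have h1 := q.isLt
        have h2 : (q : ℕ) ≠ 2 * r := fun hv => hq (Fin.ext (hv.trans hvl.symm))
        omega
      rw [Matrix.star_apply, hrow q hqv, star_zero, mul_zero]
    · simp
  have hinr : ∀ i : Fin 1, finSumFinEquiv (Sum.inr i) = Fin.last (2 * r) :=
    fun i => Fin.ext (by rw [sumInr_val, hvl])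
  refine ⟨fun k => blockSU A hA ↑k (by have := k.isLt; omega) (hc _ _),
    ⟨A (Fin.last (2 * r)) (Fin.last (2 * r)), ?_⟩, ?_⟩
  · rw [Unitary.mem_iff]
    exact ⟨by rw [mul_comm]; exact hzz, hzz⟩
  · ext p q
    obtain ⟨s, rfl⟩ := finSumFinEquiv.surjective p
    obtain ⟨t, rfl⟩ := finSumFinEquiv.surjective q
    rcases s with i | i <;> rcases t with i' | i'
    · obtain ⟨⟨a, k⟩, rfl⟩ := (pairEquiv r).surjective i
      obtain ⟨⟨a', k'⟩, rfl⟩ := (pairEquiv r).surjective i'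
      rw [suOdd_apply_ll, suBlock_apply]
      have hIdx : ∀ (a : Fin 2) (k : Fin r), finSumFinEquiv (Sum.inl (pairEquiv r (a, k)))
          = (⟨(a : ℕ) + 2 * (k : ℕ),
              by have := a.isLt; have := k.isLt; omega⟩ : Fin (2 * r + 1)) :=
        fun a k => Fin.ext (by rw [sumInl_val, pairEquiv_val])
      rw [hIdx, hIdx]
      exact block_entries (by omega) A hA hc a a' k k'
    · rw [suOdd_apply_lr, hinr i']
      refine hcol _ (fun h => ?_)
      have hv := congrArg Fin.val h
      rw [sumInl_val, hvl] at hv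
      have := i.isLt; omega
    · rw [suOdd_apply_rl, hinr i]
      refine hrow _ ?_
      rw [sumInl_val]
      exact i'.isLt
    · rw [suOdd_apply_rr, hinr i, hinr i']

lemma odd_backward (r : ℕ) (B : Fin r → SUgrp 2) (z : unitary ℂ) (j : ℕ) (hjr : j < r)
    (hj1 : 2 * j + 1 < 2 * r + 1) :
    suOddMatrixHom r (B, z) * aBasisMat (2 * r + 1) j hj1 * (suOddMatrixHom r (B, z))ᵀ
      = aBasisMat (2 * r + 1) j hj1 := by
  ext p q
  rw [conj_entry]
  have hc0 : (⟨2 * j, by omega⟩ : Fin (2 * r + 1))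
      = finSumFinEquiv (Sum.inl (pairEquiv r (0, ⟨j, hjr⟩))) :=
    Fin.ext (by rw [sumInl_val, pairEquiv_val]; show 2 * j = ↑(0 : Fin 2) + 2 * j; simp)
  have hc1 : (⟨2 * j + 1, hj1⟩ : Fin (2 * r + 1))
      = finSumFinEquiv (Sum.inl (pairEquiv r (1, ⟨j, hjr⟩))) :=
    Fin.ext (by
      rw [sumInl_val, pairEquiv_val]
      show 2 * j + 1 = ↑(1 : Fin 2) + 2 * j
      rw [Fin.val_one]; omega)
  rw [hc0, hc1]
  obtain ⟨s, rfl⟩ := finSumFinEquiv.surjective p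
  obtain ⟨t, rfl⟩ := finSumFinEquiv.surjective q
  rcases s with i | i <;> rcases t with i' | i'
  · obtain ⟨⟨a, k⟩, rfl⟩ := (pairEquiv r).surjective i
    obtain ⟨⟨a', k'⟩, rfl⟩ := (pairEquiv r).surjective i'
    rw [suOdd_apply_ll, suOdd_apply_ll, suOdd_apply_ll, suOdd_apply_ll, suBlock_apply,
      suBlock_apply, suBlock_apply, suBlock_apply, aBasisMat_apply, sumInl_val, sumInl_val,
      pairEquiv_val, pairEquiv_val]
    exact block_prod r B j hjr a a' k k'
  · rw [suOdd_apply_rl, suOdd_apply_rl, aBasisMat_apply, sumInr_val]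
    split_ifs <;> first | omega | ring
  · rw [suOdd_apply_rl, suOdd_apply_rl, aBasisMat_apply, sumInr_val]
    split_ifs <;> first | omega | ring
  · rw [suOdd_apply_rl, suOdd_apply_rl, suOdd_apply_rl, suOdd_apply_rl, aBasisMat_apply,
      sumInr_val]
    split_ifs <;> first | omega | ring

end OddLemmas

/-- the centralizer in `U(n)` of
`𝔞 = Σ_j ℝ(E_{2j-1,2j} - E_{2j,2j-1})` for the action `A · X = A X Aᵀ` equals the
block-diagonal subgroup `SU(2)^r = {diag(A₁, …, A_r)}` when `n = 2r`, and equals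
`SU(2)^r × U(1) = {diag(A₁, …, A_r, z)}` when `n = 2r + 1`. -/
theorem statement_16 (r : ℕ) :
    ({A : Matrix.unitaryGroup (Fin (2 * r)) ℂ |
        ∀ j : Fin r,
          (A : Matrix (Fin (2 * r)) (Fin (2 * r)) ℂ) *
              aBasisMat (2 * r) j (by have := j.isLt; omega) *
            Matrix.transpose (A : Matrix (Fin (2 * r)) (Fin (2 * r)) ℂ)
          = aBasisMat (2 * r) j (by have := j.isLt; omega)}
      = {A : Matrix.unitaryGroup (Fin (2 * r)) ℂ | ∃ B : Fin r → SUgrp 2,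
          (A : Matrix (Fin (2 * r)) (Fin (2 * r)) ℂ) = suBlockMatrixHom r B}) ∧
    ({A : Matrix.unitaryGroup (Fin (2 * r + 1)) ℂ |
        ∀ j : Fin r,
          (A : Matrix (Fin (2 * r + 1)) (Fin (2 * r + 1)) ℂ) *
              aBasisMat (2 * r + 1) j (by have := j.isLt; omega) *
            Matrix.transpose (A : Matrix (Fin (2 * r + 1)) (Fin (2 * r + 1)) ℂ)
          = aBasisMat (2 * r + 1) j (by have := j.isLt; omega)}
      = {A : Matrix.unitaryGroup (Fin (2 * r + 1)) ℂ |
          ∃ (B : Fin r → SUgrp 2) (z : unitary ℂ),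
            (A : Matrix (Fin (2 * r + 1)) (Fin (2 * r + 1)) ℂ) = suOddMatrixHom r (B, z)}) := by
  constructor
  · ext A
    simp only [Set.mem_setOf_eq]
    constructor
    · intro h
      exact even_forward r ↑A A.2 (fun j hj => h ⟨j, by omega⟩)
    · rintro ⟨B, hB⟩ j
      rw [hB]
      exact even_backward r B ↑j (by have := j.isLt; omega)
  · ext A
    simp only [Set.mem_setOf_eq]
    constructor
    · intro h
      exact odd_forward r ↑A A.2 (fun j hj => h ⟨j, by omega⟩)
    · rintro ⟨B, z, hB⟩ j
      rw [hB]
      exact odd_backward r B z ↑j j.isLt (by have := j.isLt; omega)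

end Stmt16Part
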